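/- Let P, W ⊆ ℝ² be finite and let a, b, c ∈ P be pairwise distinct points such that all three of ab, bc, ca are edges of the witness Gabriel graph GG⁻(P,W). Then any two distinct points of P lying in the triangle convexHull{a,b,c} are adjacent in GG⁻(P,W); in particular the points of P in the triangle, together with a, b, c, induce a complete subgraph. -/
import Mathlib


open scoped RealInnerProductSpace

noncomputable section

/-- The Euclidean plane. -/
abbrev Pt := EuclideanSpace ℝ (Fin 2)

/-- The closed disk with diameter `ab`. -/
def diskD (a b : Pt) : Set Pt := Metric.closedBall (midpoint ℝ a b) (dist a b / 2)

/-- `a` and `b` are adjacent in the witness Gabriel graph with witness set `W`. -/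
def gabrielEdge (W : Set Pt) (a b : Pt) : Prop := (diskD a b \ {a, b}) ∩ W = ∅

/-- General position: no three points collinear, no four points concyclic. -/
def GenPos (S : Set Pt) : Prop :=
  (∀ a ∈ S, ∀ b ∈ S, ∀ c ∈ S, a ≠ b → a ≠ c → b ≠ c → ¬ Collinear ℝ ({a, b, c} : Set Pt)) ∧
  (∀ a ∈ S, ∀ b ∈ S, ∀ c ∈ S, ∀ d ∈ S, a ≠ b → a ≠ c → a ≠ d → b ≠ c → b ≠ d → c ≠ d →
    ¬ EuclideanGeometry.Cospherical ({a, b, c, d} : Set Pt))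

/-- Planar determinant `u₁v₂ − u₂v₁`. -/
def det2 (u v : Pt) : ℝ := u 0 * v 1 - u 1 * v 0

/-- Counterclockwise convex position. -/
def CCWConvexPos {m : ℕ} (q : Fin m → Pt) : Prop :=
  ∀ i j k : Fin m, i < j → j < k → 0 < det2 (q j - q i) (q k - q i)

/-- Cyclic successor in `Fin m`. -/
def cyclicSucc {m : ℕ} (hm : 0 < m) (i : Fin m) : Fin m :=
  ⟨((i : ℕ) + 1) % m, Nat.mod_lt _ hm⟩


lemma core2 (lb lc mb mc B C S : ℝ) (hlb : 0 ≤ lb) (hlc : 0 ≤ lc)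
    (hmb : 0 ≤ mb) (hmc : 0 ≤ mc) (hB : 0 < B) (hC : 0 < C) (hS : 0 < S)
    (hl : 0 < lb + lc) (hm : 0 < mb + mc)
    (hE : lb*mb*B + lb*mc*S + lc*mb*S + lc*mc*C ≤ 0) : False := by
  have n1 : 0 ≤ lb*mb*B := mul_nonneg (mul_nonneg hlb hmb) hB.le
  have n2 : 0 ≤ lb*mc*S := mul_nonneg (mul_nonneg hlb hmc) hS.le
  have n3 : 0 ≤ lc*mb*S := mul_nonneg (mul_nonneg hlc hmb) hS.le
  have n4 : 0 ≤ lc*mc*C := mul_nonneg (mul_nonneg hlc hmc) hC.le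
  have h1 : 0 < lb ∨ 0 < lc := by by_contra h; push_neg at h; linarith [h.1, h.2]
  have h2 : 0 < mb ∨ 0 < mc := by by_contra h; push_neg at h; linarith [h.1, h.2]
  rcases h1 with h | h <;> rcases h2 with g | g
  · linarith [mul_pos (mul_pos h g) hB]
  · linarith [mul_pos (mul_pos h g) hS]
  · linarith [mul_pos (mul_pos h g) hS]
  · linarith [mul_pos (mul_pos h g) hC]

lemma core3 (la lb lc ma mb mc A B C sab sac sbc : ℝ)
    (hla : 0 ≤ la) (hlb : 0 ≤ lb) (hlc : 0 ≤ lc)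
    (hma : 0 ≤ ma) (hmb : 0 ≤ mb) (hmc : 0 ≤ mc)
    (hA : 0 < A) (hB : 0 < B) (hC : 0 < C)
    (hsab : 0 < sab) (hsac : 0 < sac) (hsbc : 0 < sbc)
    (hl : la + lb + lc = 1) (hm : ma + mb + mc = 1)
    (hE : la*ma*A + la*mb*sab + la*mc*sac + lb*ma*sab + lb*mb*B + lb*mc*sbc
        + lc*ma*sac + lc*mb*sbc + lc*mc*C ≤ 0) : False := by
  have n1 : 0 ≤ la*ma*A := mul_nonneg (mul_nonneg hla hma) hA.le
  have n2 : 0 ≤ la*mb*sab := mul_nonneg (mul_nonneg hla hmb) hsab.le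
  have n3 : 0 ≤ la*mc*sac := mul_nonneg (mul_nonneg hla hmc) hsac.le
  have n4 : 0 ≤ lb*ma*sab := mul_nonneg (mul_nonneg hlb hma) hsab.le
  have n5 : 0 ≤ lb*mb*B := mul_nonneg (mul_nonneg hlb hmb) hB.le
  have n6 : 0 ≤ lb*mc*sbc := mul_nonneg (mul_nonneg hlb hmc) hsbc.le
  have n7 : 0 ≤ lc*ma*sac := mul_nonneg (mul_nonneg hlc hma) hsac.le
  have n8 : 0 ≤ lc*mb*sbc := mul_nonneg (mul_nonneg hlc hmb) hsbc.le
  have n9 : 0 ≤ lc*mc*C := mul_nonneg (mul_nonneg hlc hmc) hC.le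
  have h1 : 0 < la ∨ 0 < lb ∨ 0 < lc := by
    by_contra h; push_neg at h; linarith [h.1, h.2.1, h.2.2]
  have h2 : 0 < ma ∨ 0 < mb ∨ 0 < mc := by
    by_contra h; push_neg at h; linarith [h.1, h.2.1, h.2.2]
  rcases h1 with h | h | h <;> rcases h2 with g | g | g
  · linarith [mul_pos (mul_pos h g) hA]
  · linarith [mul_pos (mul_pos h g) hsab]
  · linarith [mul_pos (mul_pos h g) hsac]
  · linarith [mul_pos (mul_pos h g) hsab]
  · linarith [mul_pos (mul_pos h g) hB]
  · linarith [mul_pos (mul_pos h g) hsbc]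
  · linarith [mul_pos (mul_pos h g) hsac]
  · linarith [mul_pos (mul_pos h g) hsbc]
  · linarith [mul_pos (mul_pos h g) hC]


lemma inner_eq_dist (a b x : Pt) :
    ⟪x - a, x - b⟫ = ‖x - midpoint ℝ a b‖^2 - (dist a b / 2)^2 := by
  have hl : midpoint ℝ a b - a = ((1:ℝ)/2) • (b - a) := by
    rw [midpoint_sub_left]; norm_num
  have hr : midpoint ℝ a b - b = -(((1:ℝ)/2) • (b - a)) := by
    rw [midpoint_sub_right, ← smul_neg, neg_sub]; norm_num
  have h1 : x - a = (x - midpoint ℝ a b) + ((1:ℝ)/2) • (b - a) := by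
    rw [← hl]; abel
  have h2 : x - b = (x - midpoint ℝ a b) - ((1:ℝ)/2) • (b - a) := by
    rw [show (x - midpoint ℝ a b) - ((1:ℝ)/2) • (b - a)
        = (x - midpoint ℝ a b) + (midpoint ℝ a b - b) from by rw [hr]; abel]
    abel
  have hd : dist a b = ‖b - a‖ := by rw [dist_eq_norm, norm_sub_rev]
  have key : ∀ u w : Pt, ⟪u + w, u - w⟫ = ‖u‖^2 - ‖w‖^2 := by
    intro u w
    simp only [inner_add_left, inner_sub_right, real_inner_self_eq_norm_sq,
      real_inner_comm w u]
    ring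
  rw [h1, h2, key, hd, norm_smul]
  norm_num
  ring

lemma mem_diskD_iff (a b x : Pt) : x ∈ diskD a b ↔ ⟪x - a, x - b⟫ ≤ 0 := by
  rw [diskD, Metric.mem_closedBall, inner_eq_dist, sub_nonpos, dist_eq_norm x,
    ← pow_le_pow_iff_left₀ (norm_nonneg _) (div_nonneg dist_nonneg (by norm_num) : (0:ℝ) ≤ dist a b / 2) two_ne_zero]


lemma exists_weights (a b c p : Pt) (hp : p ∈ convexHull ℝ ({a,b,c} : Set Pt)) :
    ∃ la lb lc : ℝ, 0 ≤ la ∧ 0 ≤ lb ∧ 0 ≤ lc ∧ la + lb + lc = 1 ∧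
      p = la • a + lb • b + lc • c := by
  rw [show ({a,b,c} : Set Pt) = insert a {b,c} from rfl,
    convexHull_insert ⟨b, by simp⟩, convexHull_pair, mem_convexJoin] at hp
  obtain ⟨a', ha', z, hz, s, t, hs, ht, hst, hp⟩ := hp
  rw [Set.mem_singleton_iff] at ha'
  subst ha'
  obtain ⟨u, v, hu, hv, huv, rfl⟩ := hz
  refine ⟨s, t*u, t*v, hs, mul_nonneg ht hu, mul_nonneg ht hv, by linear_combination hst + t * huv, ?_⟩
  rw [← hp, smul_add, mul_smul, mul_smul, add_assoc]

lemma inner_self_pos' (u v : Pt) (h : u ≠ v) : 0 < ⟪u - v, u - v⟫ := by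
  rw [real_inner_self_eq_norm_sq]
  exact pow_pos (norm_pos_iff.mpr (sub_ne_zero.mpr h)) 2

lemma key (a b c x p q : Pt) (hab : a ≠ b) (hbc : b ≠ c) (hac : a ≠ c)
    (hp : p ∈ convexHull ℝ ({a,b,c} : Set Pt)) (hq : q ∈ convexHull ℝ ({a,b,c} : Set Pt))
    (hxp : x ≠ p) (hxq : x ≠ q) (hE : ⟪x - p, x - q⟫ ≤ 0) :
    (x ≠ a ∧ x ≠ b ∧ ⟪x - a, x - b⟫ ≤ 0) ∨ (x ≠ b ∧ x ≠ c ∧ ⟪x - b, x - c⟫ ≤ 0) ∨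
    (x ≠ c ∧ x ≠ a ∧ ⟪x - c, x - a⟫ ≤ 0) := by
  by_contra hcon
  push_neg at hcon
  obtain ⟨H1, H2, H3⟩ := hcon
  obtain ⟨la, lb, lc, hla, hlb, hlc, hl, hpe⟩ := exists_weights a b c p hp
  obtain ⟨ma, mb, mc, hma, hmb, hmc, hm, hqe⟩ := exists_weights a b c q hq
  have hxp' : x - p = la • (x-a) + lb • (x-b) + lc • (x-c) := by
    rw [hpe]; match_scalars <;> linarith
  have hxq' : x - q = ma • (x-a) + mb • (x-b) + mc • (x-c) := by
    rw [hqe]; match_scalars <;> linarith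
  have hexp : ⟪x - p, x - q⟫ =
      la*ma*⟪x-a,x-a⟫ + la*mb*⟪x-a,x-b⟫ + la*mc*⟪x-a,x-c⟫
    + lb*ma*⟪x-a,x-b⟫ + lb*mb*⟪x-b,x-b⟫ + lb*mc*⟪x-b,x-c⟫
    + lc*ma*⟪x-a,x-c⟫ + lc*mb*⟪x-b,x-c⟫ + lc*mc*⟪x-c,x-c⟫ := by
    rw [hxp', hxq']
    simp only [inner_add_left, inner_add_right, real_inner_smul_left, real_inner_smul_right]
    rw [real_inner_comm (x-b) (x-a), real_inner_comm (x-c) (x-a), real_inner_comm (x-c) (x-b)]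
    ring
  rw [hexp] at hE
  -- helper for positivity of weight sums from x ≠ p style facts
  by_cases hxa : x = a
  · have hxb : x ≠ b := hxa ▸ hab
    have hxc : x ≠ c := hxa ▸ hac
    have e0 : x - a = 0 := sub_eq_zero_of_eq hxa
    have e1 : ⟪x-a,x-a⟫ = (0:ℝ) := by rw [e0, inner_zero_left]
    have e2 : ⟪x-a,x-b⟫ = (0:ℝ) := by rw [e0, inner_zero_left]
    have e3 : ⟪x-a,x-c⟫ = (0:ℝ) := by rw [e0, inner_zero_left]
    rw [e1, e2, e3] at hE
    have hB := inner_self_pos' x b hxb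
    have hC := inner_self_pos' x c hxc
    have hS := H2 hxb hxc
    have hpl : 0 < lb + lc := by
      rcases lt_or_ge 0 (lb + lc) with h | h
      · exact h
      · exfalso
        have hlb0 : lb = 0 := le_antisymm (by linarith) hlb
        have hlc0 : lc = 0 := le_antisymm (by linarith) hlc
        apply hxp
        rw [hpe, hlb0, hlc0, show la = 1 from by linarith]
        simp [hxa]
    have hpm : 0 < mb + mc := by
      rcases lt_or_ge 0 (mb + mc) with h | h
      · exact h
      · exfalso
        have hmb0 : mb = 0 := le_antisymm (by linarith) hmb
        have hmc0 : mc = 0 := le_antisymm (by linarith) hmc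
        apply hxq
        rw [hqe, hmb0, hmc0, show ma = 1 from by linarith]
        simp [hxa]
    exact core2 lb lc mb mc _ _ _ hlb hlc hmb hmc hB hC hS hpl hpm (by linarith)
  by_cases hxb : x = b
  · have hxa' : x ≠ a := fun h => hab (h.symm.trans hxb)
    have hxc : x ≠ c := hxb ▸ hbc
    have e0 : x - b = 0 := sub_eq_zero_of_eq hxb
    have e1 : ⟪x-b,x-b⟫ = (0:ℝ) := by rw [e0, inner_zero_left]
    have e2 : ⟪x-a,x-b⟫ = (0:ℝ) := by rw [e0, inner_zero_right]
    have e3 : ⟪x-b,x-c⟫ = (0:ℝ) := by rw [e0, inner_zero_left]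
    rw [e1, e2, e3] at hE
    have hA := inner_self_pos' x a hxa'
    have hC := inner_self_pos' x c hxc
    have hS : 0 < ⟪x-a,x-c⟫ := by rw [real_inner_comm]; exact H3 hxc hxa'
    have hpl : 0 < la + lc := by
      rcases lt_or_ge 0 (la + lc) with h | h
      · exact h
      · exfalso
        have hla0 : la = 0 := le_antisymm (by linarith) hla
        have hlc0 : lc = 0 := le_antisymm (by linarith) hlc
        apply hxp
        rw [hpe, hla0, hlc0, show lb = 1 from by linarith]
        simp [hxb]
    have hpm : 0 < ma + mc := by
      rcases lt_or_ge 0 (ma + mc) with h | h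
      · exact h
      · exfalso
        have hma0 : ma = 0 := le_antisymm (by linarith) hma
        have hmc0 : mc = 0 := le_antisymm (by linarith) hmc
        apply hxq
        rw [hqe, hma0, hmc0, show mb = 1 from by linarith]
        simp [hxb]
    exact core2 la lc ma mc _ _ _ hla hlc hma hmc hA hC hS hpl hpm (by linarith)
  by_cases hxc : x = c
  · have hxa' : x ≠ a := fun h => hac (h.symm.trans hxc)
    have hxb' : x ≠ b := fun h => hbc (h.symm.trans hxc)
    have e0 : x - c = 0 := sub_eq_zero_of_eq hxc
    have e1 : ⟪x-c,x-c⟫ = (0:ℝ) := by rw [e0, inner_zero_left]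
    have e2 : ⟪x-a,x-c⟫ = (0:ℝ) := by rw [e0, inner_zero_right]
    have e3 : ⟪x-b,x-c⟫ = (0:ℝ) := by rw [e0, inner_zero_right]
    rw [e1, e2, e3] at hE
    have hA := inner_self_pos' x a hxa'
    have hB := inner_self_pos' x b hxb'
    have hS : 0 < ⟪x-a,x-b⟫ := H1 hxa' hxb'
    have hpl : 0 < la + lb := by
      rcases lt_or_ge 0 (la + lb) with h | h
      · exact h
      · exfalso
        have hla0 : la = 0 := le_antisymm (by linarith) hla
        have hlb0 : lb = 0 := le_antisymm (by linarith) hlb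
        apply hxp
        rw [hpe, hla0, hlb0, show lc = 1 from by linarith]
        simp [hxc]
    have hpm : 0 < ma + mb := by
      rcases lt_or_ge 0 (ma + mb) with h | h
      · exact h
      · exfalso
        have hma0 : ma = 0 := le_antisymm (by linarith) hma
        have hmb0 : mb = 0 := le_antisymm (by linarith) hmb
        apply hxq
        rw [hqe, hma0, hmb0, show mc = 1 from by linarith]
        simp [hxc]
    exact core2 la lb ma mb _ _ _ hla hlb hma hmb hA hB hS hpl hpm (by linarith)
  · have hA := inner_self_pos' x a hxa
    have hB := inner_self_pos' x b hxb
    have hC := inner_self_pos' x c hxc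
    have hsab := H1 hxa hxb
    have hsbc := H2 hxb hxc
    have hsac : 0 < ⟪x-a,x-c⟫ := by rw [real_inner_comm]; exact H3 hxc hxa
    exact core3 la lb lc ma mb mc _ _ _ _ _ _ hla hlb hlc hma hmb hmc hA hB hC
      hsab hsac hsbc hl hm hE

/-- If a triangle `abc` is a subgraph of a witness Gabriel graph, then all
vertices inside the triangle (together with `a,b,c`) form a complete subgraph. -/
theorem triangle_subgraph_complete
    (P W : Finset Pt) (a b c : Pt) (ha : a ∈ P) (hb : b ∈ P) (hc : c ∈ P)
    (hab : a ≠ b) (hbc : b ≠ c) (hac : a ≠ c)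
    (eab : gabrielEdge (W : Set Pt) a b) (ebc : gabrielEdge (W : Set Pt) b c)
    (eca : gabrielEdge (W : Set Pt) c a) :
    ∀ p ∈ P, ∀ q ∈ P, p ≠ q →
      p ∈ convexHull ℝ ({a, b, c} : Set Pt) →
      q ∈ convexHull ℝ ({a, b, c} : Set Pt) →
      gabrielEdge (W : Set Pt) p q := by
  intro p _ q _ _ hpc hqc
  rw [gabrielEdge, Set.eq_empty_iff_forall_notMem]
  rintro x ⟨⟨hxD, hxpq⟩, hxW⟩
  simp only [Set.mem_insert_iff, Set.mem_singleton_iff, not_or] at hxpq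
  obtain ⟨hxp, hxq⟩ := hxpq
  have hE := (mem_diskD_iff p q x).mp hxD
  rcases key a b c x p q hab hbc hac hpc hqc hxp hxq hE with
    ⟨h1, h2, h3⟩ | ⟨h1, h2, h3⟩ | ⟨h1, h2, h3⟩
  · exact Set.eq_empty_iff_forall_notMem.mp eab x
      ⟨⟨(mem_diskD_iff a b x).mpr h3, by simp [h1, h2]⟩, hxW⟩
  · exact Set.eq_empty_iff_forall_notMem.mp ebc x
      ⟨⟨(mem_diskD_iff b c x).mpr h3, by simp [h1, h2]⟩, hxW⟩
  · exact Set.eq_empty_iff_forall_notMem.mp eca x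
      ⟨⟨(mem_diskD_iff c a x).mpr h3, by simp [h1, h2]⟩, hxW⟩
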